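/- (Corollary of Powers–Størmer) If u is a unitary n×n matrix and h is a positive semidefinite n×n matrix, then ‖u h^{1/2} − h^{1/2} u‖_HS = ‖u h^{1/2} u* − h^{1/2}‖_HS ≤ ‖u h u* − h‖₁^{1/2}. -/

import Mathlib

open Matrix
open scoped ComplexOrder

/-- The square root of a positive semidefinite matrix, as defined in the older Mathlib
(`Matrix.PosSemidef.sqrt`, since removed). -/
noncomputable def Matrix.PosSemidef.sqrt {m : Type*} [Fintype m] [DecidableEq m] {𝕜 : Type*} [RCLike 𝕜]
    {A : Matrix m m 𝕜} (hA : A.PosSemidef) : Matrix m m 𝕜 :=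
  hA.1.eigenvectorUnitary.1 * diagonal ((↑) ∘ (√·) ∘ hA.1.eigenvalues) *
    (star hA.1.eigenvectorUnitary : Matrix m m 𝕜)

/-- The Hilbert–Schmidt norm `‖x‖_HS = √(Tr(x* x))` of a complex matrix. -/
noncomputable def hsNorm {n : ℕ} (x : Matrix (Fin n) (Fin n) ℂ) : ℝ :=
  Real.sqrt ((xᴴ * x).trace.re)

/-- The trace norm `‖x‖₁ = Tr(|x|) = Tr(√(x* x))` of a complex matrix. -/
noncomputable def traceNorm {n : ℕ} (x : Matrix (Fin n) (Fin n) ℂ) : ℝ :=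
  ((Matrix.posSemidef_conjTranspose_mul_self x).sqrt).trace.re

section sqrt_api
open scoped MatrixOrder

lemma Matrix.PosSemidef.sqrt_eq_cfc {m : Type*} [Fintype m] [DecidableEq m] {𝕜 : Type*} [RCLike 𝕜]
    {A : Matrix m m 𝕜} (hA : A.PosSemidef) : hA.sqrt = CFC.sqrt A := by
  rw [CFC.sqrt_eq_real_sqrt A hA.nonneg,
    cfcₙ_eq_cfc (hf := Real.continuous_sqrt.continuousOn) (hf0 := Real.sqrt_zero), hA.1.cfc_eq]
  rfl

lemma Matrix.PosSemidef.posSemidef_sqrt {m : Type*} [Fintype m] [DecidableEq m] {𝕜 : Type*}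
    [RCLike 𝕜] {A : Matrix m m 𝕜} (hA : A.PosSemidef) : hA.sqrt.PosSemidef := by
  rw [hA.sqrt_eq_cfc]
  exact (CFC.sqrt_nonneg A).posSemidef

lemma Matrix.PosSemidef.sqrt_mul_self {m : Type*} [Fintype m] [DecidableEq m] {𝕜 : Type*}
    [RCLike 𝕜] {A : Matrix m m 𝕜} (hA : A.PosSemidef) : hA.sqrt * hA.sqrt = A := by
  rw [hA.sqrt_eq_cfc]
  exact CFC.sqrt_mul_sqrt_self A hA.nonneg

lemma Matrix.PosSemidef.eq_sqrt_of_sq_eq {m : Type*} [Fintype m] [DecidableEq m] {𝕜 : Type*}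
    [RCLike 𝕜] {A B : Matrix m m 𝕜} (hA : A.PosSemidef) (hB : B.PosSemidef) (h : A ^ 2 = B) :
    A = hB.sqrt := by
  rw [hB.sqrt_eq_cfc, ← h, CFC.sqrt_sq A hA.nonneg]

end sqrt_api

lemma psd_diag {n : ℕ} {P : Matrix (Fin n) (Fin n) ℂ} (hP : P.PosSemidef) (i : Fin n) :
    0 ≤ P i i := by
  exact hP.diag_nonneg

lemma abs_spec {n : ℕ} {c : Matrix (Fin n) (Fin n) ℂ} (hc : c.IsHermitian) :
    (Matrix.posSemidef_conjTranspose_mul_self c).sqrt =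
      (hc.eigenvectorUnitary : Matrix (Fin n) (Fin n) ℂ) *
        diagonal (fun i => (Complex.ofReal |hc.eigenvalues i|)) *
        star (hc.eigenvectorUnitary : Matrix (Fin n) (Fin n) ℂ) := by
  set W : Matrix (Fin n) (Fin n) ℂ := (hc.eigenvectorUnitary : Matrix (Fin n) (Fin n) ℂ)
  have hW : star W * W = 1 := Unitary.coe_star_mul_self hc.eigenvectorUnitary
  have hpsd : Matrix.PosSemidef (W * diagonal (fun i => (Complex.ofReal |hc.eigenvalues i|)) * star W) := by
    have : Matrix.PosSemidef (diagonal (fun i => (Complex.ofReal |hc.eigenvalues i|))) :=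
      posSemidef_diagonal_iff.mpr fun i => by
        rw [Complex.zero_le_real]; exact abs_nonneg _
    simpa [Matrix.star_eq_conjTranspose] using this.mul_mul_conjTranspose_same W
  have hsq : (W * diagonal (fun i => (Complex.ofReal |hc.eigenvalues i|)) * star W) ^ 2 = cᴴ * c := by
    have hspec : c = W * diagonal (RCLike.ofReal ∘ hc.eigenvalues) * star W := hc.spectral_theorem
    rw [hc.eq]
    conv_rhs => rw [hspec]
    rw [pow_two]
    calc W * diagonal (fun i => (Complex.ofReal |hc.eigenvalues i|)) * star W *
          (W * diagonal (fun i => (Complex.ofReal |hc.eigenvalues i|)) * star W)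
        = W * (diagonal (fun i => (Complex.ofReal |hc.eigenvalues i|)) *
            diagonal (fun i => (Complex.ofReal |hc.eigenvalues i|))) * star W := by
          simp only [mul_assoc]
          rw [← mul_assoc (star W) W, hW, one_mul]
      _ = W * (diagonal (RCLike.ofReal ∘ hc.eigenvalues) *
            diagonal (RCLike.ofReal ∘ hc.eigenvalues)) * star W := by
          have heq : (fun i => (Complex.ofReal |hc.eigenvalues i|) *
              Complex.ofReal |hc.eigenvalues i|) =
              fun i => (RCLike.ofReal ∘ hc.eigenvalues) i * (RCLike.ofReal ∘ hc.eigenvalues) i := by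
            funext i
            have hco : (RCLike.ofReal : ℝ → ℂ) = Complex.ofReal := rfl
            simp only [Function.comp, hco]
            norm_cast
            exact abs_mul_abs_self _
          rw [diagonal_mul_diagonal, diagonal_mul_diagonal, heq]
      _ = _ := by
          simp only [mul_assoc]
          rw [← mul_assoc (star W) W, hW, one_mul]
  exact (hpsd.eq_sqrt_of_sq_eq (Matrix.posSemidef_conjTranspose_mul_self c) hsq).symm

lemma abs_sub_psd {n : ℕ} {c : Matrix (Fin n) (Fin n) ℂ} (hc : c.IsHermitian) :
    ((Matrix.posSemidef_conjTranspose_mul_self c).sqrt - c).PosSemidef := by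
  set W : Matrix (Fin n) (Fin n) ℂ := (hc.eigenvectorUnitary : Matrix (Fin n) (Fin n) ℂ)
  have h3 : (Matrix.posSemidef_conjTranspose_mul_self c).sqrt - c =
      W * (diagonal (fun i => (Complex.ofReal |hc.eigenvalues i|)) -
        diagonal (RCLike.ofReal ∘ hc.eigenvalues)) * star W := by
    rw [mul_sub, sub_mul, ← abs_spec hc]
    exact congrArg _ hc.spectral_theorem
  rw [h3, diagonal_sub]
  refine PosSemidef.mul_mul_conjTranspose_same ?_ W
  refine posSemidef_diagonal_iff.mpr fun i => ?_
  have hco : (RCLike.ofReal : ℝ → ℂ) = Complex.ofReal := rfl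
  simp only [Pi.sub_apply, Function.comp, hco, ← Complex.ofReal_sub, Complex.zero_le_real]
  have := le_abs_self (hc.eigenvalues i)
  linarith

lemma abs_add_psd {n : ℕ} {c : Matrix (Fin n) (Fin n) ℂ} (hc : c.IsHermitian) :
    ((Matrix.posSemidef_conjTranspose_mul_self c).sqrt + c).PosSemidef := by
  set W : Matrix (Fin n) (Fin n) ℂ := (hc.eigenvectorUnitary : Matrix (Fin n) (Fin n) ℂ)
  have h3 : (Matrix.posSemidef_conjTranspose_mul_self c).sqrt + c =
      W * (diagonal (fun i => (Complex.ofReal |hc.eigenvalues i|)) +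
        diagonal (RCLike.ofReal ∘ hc.eigenvalues)) * star W := by
    rw [mul_add, add_mul, ← abs_spec hc]
    exact congrArg _ hc.spectral_theorem
  rw [h3, diagonal_add]
  refine PosSemidef.mul_mul_conjTranspose_same ?_ W
  refine posSemidef_diagonal_iff.mpr fun i => ?_
  have hco : (RCLike.ofReal : ℝ → ℂ) = Complex.ofReal := rfl
  simp only [Pi.add_apply, Function.comp, hco, ← Complex.ofReal_add, Complex.zero_le_real]
  have := neg_abs_le (hc.eigenvalues i)
  linarith


set_option maxHeartbeats 1000000 in
lemma key_ineq {n : ℕ} {s t : Matrix (Fin n) (Fin n) ℂ}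
    (hs : s.PosSemidef) (ht : t.PosSemidef) :
    ((s - t)ᴴ * (s - t)).trace.re ≤ traceNorm (s * s - t * t) := by
  set d : Matrix (Fin n) (Fin n) ℂ := s - t with hd_def
  have hdh : d.IsHermitian := hs.1.sub ht.1
  set μ : Fin n → ℝ := hdh.eigenvalues with hμ
  set W : Matrix (Fin n) (Fin n) ℂ := (hdh.eigenvectorUnitary : Matrix (Fin n) (Fin n) ℂ) with hWdef
  have hW1 : star W * W = 1 := Unitary.coe_star_mul_self hdh.eigenvectorUnitary
  have hW2 : W * star W = 1 := Unitary.coe_mul_star_self hdh.eigenvectorUnitary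
  set D : Matrix (Fin n) (Fin n) ℂ := diagonal (RCLike.ofReal ∘ μ) with hDdef
  have hspec : d = W * D * star W := hdh.spectral_theorem
  set c : Matrix (Fin n) (Fin n) ℂ := s * s - t * t with hc_def
  have hch : c.IsHermitian := by
    unfold c
    unfold Matrix.IsHermitian
    rw [conjTranspose_sub, conjTranspose_mul, conjTranspose_mul, hs.1.eq, ht.1.eq]
  set q : Matrix (Fin n) (Fin n) ℂ := (Matrix.posSemidef_conjTranspose_mul_self c).sqrt with hq_def
  have hq : q.PosSemidef := Matrix.PosSemidef.posSemidef_sqrt _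
  set P : Matrix (Fin n) (Fin n) ℂ := star W * (s + t) * W with hP_def
  set N : Matrix (Fin n) (Fin n) ℂ := star W * q * W with hN_def
  set M : Matrix (Fin n) (Fin n) ℂ := star W * c * W with hM_def
  have hP : P.PosSemidef := by
    have := (hs.add ht).conjTranspose_mul_mul_same W
    rw [← Matrix.star_eq_conjTranspose] at this
    exact this
  have hNM_sub : (N - M).PosSemidef := by
    have : N - M = star W * (q - c) * W := by rw [mul_sub, sub_mul]
    rw [this]
    have := (abs_sub_psd hch).conjTranspose_mul_mul_same W
    rw [← Matrix.star_eq_conjTranspose] at this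
    exact this
  have hNM_add : (N + M).PosSemidef := by
    have : N + M = star W * (q + c) * W := by rw [mul_add, add_mul]
    rw [this]
    have := (abs_add_psd hch).conjTranspose_mul_mul_same W
    rw [← Matrix.star_eq_conjTranspose] at this
    exact this
  have hDW : star W * d * W = D := by
    rw [hspec]
    calc star W * (W * D * star W) * W
        = (star W * W) * D * (star W * W) := by simp only [mul_assoc]
      _ = D := by rw [hW1]; simp
  have hPD_sub : (P - D).PosSemidef := by
    have : P - D = star W * (t + t) * W := by
      rw [← hDW, ← sub_mul, ← mul_sub]
      congr 2
      unfold d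
      abel
    rw [this]
    simpa [Matrix.star_eq_conjTranspose] using (ht.add ht).conjTranspose_mul_mul_same W
  have hPD_add : (P + D).PosSemidef := by
    have : P + D = star W * (s + s) * W := by
      rw [← hDW, ← add_mul, ← mul_add]
      congr 2
      unfold d
      abel
    rw [this]
    simpa [Matrix.star_eq_conjTranspose] using (hs.add hs).conjTranspose_mul_mul_same W
  -- M + M = D * P + P * D
  have h2c : c + c = d * (s + t) + (s + t) * d := by
    unfold c d
    noncomm_ring
  have hdW2 : star W * d = D * star W := by
    rw [hspec]
    calc star W * (W * D * star W) = (star W * W) * D * star W := by simp only [mul_assoc]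
      _ = D * star W := by rw [hW1, one_mul]
  have hWd2 : d * W = W * D := by
    rw [hspec]
    calc W * D * star W * W = W * D * (star W * W) := by simp only [mul_assoc]
      _ = W * D := by rw [hW1, mul_one]
  have hMM : M + M = D * P + P * D := by
    have e1 : M + M = star W * (c + c) * W := by rw [mul_add, add_mul]
    rw [e1, h2c, mul_add, add_mul]
    refine congrArg₂ (· + ·) ?_ ?_
    · calc star W * (d * (s + t)) * W = (star W * d) * ((s + t) * W) := by
            simp only [mul_assoc]
        _ = D * (star W * ((s + t) * W)) := by rw [hdW2]; simp only [mul_assoc]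
        _ = D * P := by rw [hP_def]; simp only [mul_assoc]
    · calc star W * ((s + t) * d) * W = (star W * (s + t)) * (d * W) := by
            simp only [mul_assoc]
        _ = (star W * (s + t)) * (W * D) := by rw [hWd2]
        _ = P * D := by rw [hP_def]; simp only [mul_assoc]
  -- entrywise facts
  have hMii : ∀ i, (M i i).re = μ i * (P i i).re := by
    intro i
    have := congrArg (fun X : Matrix (Fin n) (Fin n) ℂ => ((X i i).re : ℝ)) hMM
    simp only [Matrix.add_apply, Complex.add_re, hDdef, diagonal_mul, mul_diagonal,
      Function.comp] at this
    have hco : (RCLike.ofReal : ℝ → ℂ) = Complex.ofReal := rfl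
    rw [hco] at this
    rw [Complex.re_ofReal_mul, Complex.mul_re] at this
    simp only [Complex.ofReal_re, Complex.ofReal_im, mul_zero, sub_zero] at this
    linarith
  have hineq : ∀ i, μ i ^ 2 ≤ (N i i).re := by
    intro i
    have hp0 : 0 ≤ (P i i).re := (Complex.le_def.mp (psd_diag hP i)).1
    have hDii : D i i = Complex.ofReal (μ i) := by
      simp [hDdef, diagonal_apply_eq]
      try rfl
    have hl1 : μ i ≤ (P i i).re := by
      have := (Complex.le_def.mp (psd_diag hPD_sub i)).1
      simp only [Matrix.sub_apply, Complex.sub_re, hDii, Complex.ofReal_re, Complex.zero_re] at this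
      linarith
    have hl2 : -(P i i).re ≤ μ i := by
      have := (Complex.le_def.mp (psd_diag hPD_add i)).1
      simp only [Matrix.add_apply, Complex.add_re, hDii, Complex.ofReal_re, Complex.zero_re] at this
      linarith
    have hm1 : (M i i).re ≤ (N i i).re := by
      have := (Complex.le_def.mp (psd_diag hNM_sub i)).1
      simp only [Matrix.sub_apply, Complex.sub_re, Complex.zero_re] at this
      linarith
    have hm2 : -(N i i).re ≤ (M i i).re := by
      have := (Complex.le_def.mp (psd_diag hNM_add i)).1
      simp only [Matrix.add_apply, Complex.add_re, Complex.zero_re] at this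
      linarith
    rw [hMii i] at hm1 hm2
    rcases le_total 0 (μ i) with hc1 | hc1
    · have : μ i * μ i ≤ μ i * (P i i).re := mul_le_mul_of_nonneg_left hl1 hc1
      nlinarith
    · have : μ i * (P i i).re ≤ μ i * μ i := by nlinarith
      nlinarith
  -- traces
  have hdd : dᴴ * d = W * (D * D) * star W := by
    rw [hdh.eq, hspec]
    calc W * D * star W * (W * D * star W)
        = W * D * (star W * W) * (D * star W) := by simp only [mul_assoc]
      _ = W * (D * D) * star W := by rw [hW1]; simp only [mul_one, mul_assoc]
  have htr1 : ((s - t)ᴴ * (s - t)).trace.re = ∑ i, μ i ^ 2 := by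
    rw [show (s - t) = d from rfl, hdd, Matrix.trace_mul_cycle, ← mul_assoc, hW1, one_mul,
      hDdef, diagonal_mul_diagonal, trace_diagonal]
    rw [Complex.re_sum]
    congr 1
    funext i
    have hco : (RCLike.ofReal : ℝ → ℂ) = Complex.ofReal := rfl
    simp [Function.comp, hco, ← Complex.ofReal_mul, sq]
  have htr2 : traceNorm (s * s - t * t) = ∑ i, (N i i).re := by
    have : N.trace = q.trace := by
      rw [hN_def, Matrix.trace_mul_cycle, hW2, one_mul]
    have h2 : traceNorm (s * s - t * t) = q.trace.re := rfl
    rw [h2, ← this, Matrix.trace, Complex.re_sum]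
    rfl
  rw [htr1, htr2]
  exact Finset.sum_le_sum fun i _ => hineq i


/-- Corollary of Powers–Størmer: for a unitary `u` and positive semidefinite `h`,
`‖u h^{1/2} − h^{1/2} u‖_HS = ‖u h^{1/2} u* − h^{1/2}‖_HS ≤ ‖u h u* − h‖₁^{1/2}`. -/
theorem powers_stormer_unitary {n : ℕ} (u h : Matrix (Fin n) (Fin n) ℂ)
    (hu : u ∈ unitary (Matrix (Fin n) (Fin n) ℂ)) (hh : h.PosSemidef) :
    hsNorm (u * hh.sqrt - hh.sqrt * u) = hsNorm (u * hh.sqrt * star u - hh.sqrt) ∧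
    hsNorm (u * hh.sqrt - hh.sqrt * u) ≤ Real.sqrt (traceNorm (u * h * star u - h)) := by
  obtain ⟨hu1, hu2⟩ := Unitary.mem_iff.mp hu
  set r : Matrix (Fin n) (Fin n) ℂ := hh.sqrt with hr_def
  have hr : r.PosSemidef := hh.posSemidef_sqrt
  have heq : u * r - r * u = (u * r * star u - r) * u := by
    rw [sub_mul, mul_assoc (u * r), hu1, mul_one]
  have hhs_eq : hsNorm (u * r - r * u) = hsNorm (u * r * star u - r) := by
    rw [heq]
    unfold hsNorm
    congr 2
    set y : Matrix (Fin n) (Fin n) ℂ := u * r * star u - r with hy_def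
    have h1 : (y * u)ᴴ * (y * u) = uᴴ * (yᴴ * y) * u := by
      rw [conjTranspose_mul]
      simp only [mul_assoc]
    rw [h1, Matrix.trace_mul_cycle, ← Matrix.star_eq_conjTranspose, hu2, one_mul]
  refine ⟨hhs_eq, ?_⟩
  rw [hhs_eq]
  have hs : (u * r * star u).PosSemidef := by
    have := hr.mul_mul_conjTranspose_same u
    rw [← Matrix.star_eq_conjTranspose] at this
    exact this
  have hss : (u * r * star u) * (u * r * star u) = u * h * star u := by
    calc (u * r * star u) * (u * r * star u)
        = u * r * (star u * u) * (r * star u) := by simp only [mul_assoc]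
      _ = u * (r * r) * star u := by rw [hu1]; simp only [mul_one, mul_assoc]
      _ = u * h * star u := by rw [hr_def, hh.sqrt_mul_self]
  have hkey := key_ineq hs hr
  rw [hss, hh.sqrt_mul_self] at hkey
  exact Real.sqrt_le_sqrt hkey
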